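/- Let k1, k2 ≥ 1 and let R : Matrix (Fin k1) (Fin k2) ℝ. Then the matrix R − H_{k1} * R * H_{k2} is the orthogonal projection of R onto the potential subspace {X : Matrix (Fin k1) (Fin k2) ℝ | B_{k1} * X * (B_{k2})ᵀ = 0} with respect to the Frobenius inner product; explicitly: (a) B_{k1} * (R − H_{k1} * R * H_{k2}) * (B_{k2})ᵀ = 0, and (b) for every X with B_{k1} * X * (B_{k2})ᵀ = 0, the Frobenius inner product trace((H_{k1} * R * H_{k2})ᵀ * X) = 0. -/

import Mathlib

open Matrix

/-- The matrix `B_k = [I_{k-1}, -1_{k-1}]` of size `(k-1) × k`. -/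
def Bmat (k : ℕ) : Matrix (Fin (k - 1)) (Fin k) ℝ :=
  Matrix.of fun i j => if (j : ℕ) = (i : ℕ) then 1 else if (j : ℕ) = k - 1 then -1 else 0

/-- The all-ones `k × k` matrix `𝟙_k 𝟙_kᵀ`. -/
def Jmat (k : ℕ) : Matrix (Fin k) (Fin k) ℝ :=
  Matrix.of fun _ _ => 1

/-- The centering matrix `H_k = I_k - (1/k) 𝟙_k 𝟙_kᵀ`. -/
noncomputable def Hmat (k : ℕ) : Matrix (Fin k) (Fin k) ℝ :=
  1 - (1 / (k : ℝ)) • Jmat k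

lemma sum_Bmat_mul (k : ℕ) (hk : 1 ≤ k) (i : Fin (k - 1)) (f : Fin k → ℝ) :
    ∑ a, Bmat k i a * f a =
      f (Fin.castLE (Nat.sub_le k 1) i) - f ⟨k - 1, by omega⟩ := by
  have hi : (i : ℕ) < k - 1 := i.isLt
  have : ∀ a : Fin k, Bmat k i a * f a =
      (if a = Fin.castLE (Nat.sub_le k 1) i then f a else 0) -
      (if a = (⟨k - 1, by omega⟩ : Fin k) then f a else 0) := by
    intro a
    simp only [Bmat, Matrix.of_apply, Fin.ext_iff, Fin.castLE]
    split_ifs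
    all_goals try ring
    all_goals exfalso; omega
  rw [Finset.sum_congr rfl (fun a _ => this a), Finset.sum_sub_distrib]
  simp

lemma Hmat_transpose (k : ℕ) : (Hmat k)ᵀ = Hmat k := by
  have hJ : (Jmat k)ᵀ = Jmat k := by ext i j; rfl
  simp [Hmat, transpose_sub, transpose_smul, hJ]

lemma Bmat_mul_Hmat (k : ℕ) (hk : 1 ≤ k) : Bmat k * Hmat k = Bmat k := by
  have hBJ : Bmat k * Jmat k = 0 := by
    ext i b
    rw [Matrix.mul_apply]
    have := sum_Bmat_mul k hk i (fun _ => (1 : ℝ))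
    simpa [Jmat] using this
  rw [Hmat, Matrix.mul_sub, Matrix.mul_one, Matrix.mul_smul, hBJ, smul_zero, sub_zero]

lemma Hmat_row_sum (k : ℕ) (hk : 1 ≤ k) (i : Fin k) : ∑ a, Hmat k i a = 0 := by
  have hk' : (k : ℝ) ≠ 0 := by positivity
  simp only [Hmat, Jmat, Matrix.sub_apply, Matrix.smul_apply, Matrix.of_apply,
    Matrix.one_apply, smul_eq_mul, mul_one, Finset.sum_sub_distrib,
    Finset.sum_const, Finset.card_univ, Fintype.card_fin, nsmul_eq_mul]
  rw [Finset.sum_ite_eq]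
  simp
  field_simp
  simp

lemma Hmat_col_sum (k : ℕ) (hk : 1 ≤ k) (j : Fin k) : ∑ b, Hmat k b j = 0 := by
  have := Hmat_row_sum k hk j
  calc ∑ b, Hmat k b j = ∑ b, (Hmat k)ᵀ j b := by rfl
    _ = ∑ b, Hmat k j b := by rw [Hmat_transpose]
    _ = 0 := this

theorem stmt8 (k1 k2 : ℕ) (hk1 : 1 ≤ k1) (hk2 : 1 ≤ k2)
    (R : Matrix (Fin k1) (Fin k2) ℝ) :
    Bmat k1 * (R - Hmat k1 * R * Hmat k2) * (Bmat k2)ᵀ = 0 ∧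
    ∀ X : Matrix (Fin k1) (Fin k2) ℝ, Bmat k1 * X * (Bmat k2)ᵀ = 0 →
      Matrix.trace ((Hmat k1 * R * Hmat k2)ᵀ * X) = 0 := by
  set L1 : Fin k1 := ⟨k1 - 1, by omega⟩
  set L2 : Fin k2 := ⟨k2 - 1, by omega⟩
  have hHBt : ∀ k, 1 ≤ k → Hmat k * (Bmat k)ᵀ = (Bmat k)ᵀ := by
    intro k hk
    calc Hmat k * (Bmat k)ᵀ = (Hmat k)ᵀ * (Bmat k)ᵀ := by rw [Hmat_transpose]
      _ = (Bmat k * Hmat k)ᵀ := by rw [← Matrix.transpose_mul]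
      _ = (Bmat k)ᵀ := by rw [Bmat_mul_Hmat k hk]
  constructor
  · rw [Matrix.mul_sub, Matrix.sub_mul]
    rw [show Bmat k1 * (Hmat k1 * R * Hmat k2) = Bmat k1 * R * Hmat k2 by
      rw [← Matrix.mul_assoc, ← Matrix.mul_assoc, Bmat_mul_Hmat k1 hk1]]
    rw [Matrix.mul_assoc (Bmat k1 * R), hHBt k2 hk2, sub_self]
  · intro X hX
    -- entrywise consequence of hX
    have key : ∀ (a : Fin k1) (b : Fin k2), X a b = X a L2 + X L1 b - X L1 L2 := by
      intro a b
      by_cases ha : (a : ℕ) = k1 - 1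
      · have : a = L1 := Fin.ext ha
        subst this; ring
      by_cases hb : (b : ℕ) = k2 - 1
      · have : b = L2 := Fin.ext hb
        subst this; ring
      have ha' : (a : ℕ) < k1 - 1 := by have := a.isLt; omega
      have hb' : (b : ℕ) < k2 - 1 := by have := b.isLt; omega
      have h0 : (Bmat k1 * X * (Bmat k2)ᵀ) ⟨a, ha'⟩ ⟨b, hb'⟩ = 0 := by rw [hX]; rfl
      have hacast : Fin.castLE (Nat.sub_le k1 1) (⟨a, ha'⟩ : Fin (k1 - 1)) = a := rfl
      have hbcast : Fin.castLE (Nat.sub_le k2 1) (⟨b, hb'⟩ : Fin (k2 - 1)) = b := rfl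
      rw [Matrix.mul_apply] at h0
      have hinner : ∀ c : Fin k2, (Bmat k1 * X) ⟨a, ha'⟩ c = X a c - X L1 c := by
        intro c
        rw [Matrix.mul_apply]
        simpa [hacast] using sum_Bmat_mul k1 hk1 ⟨a, ha'⟩ (fun t => X t c)
      have : ∑ c, (Bmat k1 * X) ⟨a, ha'⟩ c * (Bmat k2)ᵀ c ⟨b, hb'⟩
          = ∑ c, Bmat k2 ⟨b, hb'⟩ c * (X a c - X L1 c) := by
        apply Finset.sum_congr rfl
        intro c _
        rw [hinner c, Matrix.transpose_apply, mul_comm]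
      rw [this, sum_Bmat_mul k2 hk2 ⟨b, hb'⟩ (fun c => X a c - X L1 c)] at h0
      simp only [hbcast] at h0
      have hL2 : (⟨k2 - 1, by omega⟩ : Fin k2) = L2 := rfl
      rw [hL2] at h0
      linarith [h0]
    -- H X H = 0
    have hHXH : Hmat k1 * X * Hmat k2 = 0 := by
      ext i j
      rw [Matrix.mul_apply]
      have hinner : ∀ b, (Hmat k1 * X) i b = ∑ a, Hmat k1 i a * X a L2 + X L1 b * 0 - X L1 L2 * 0 := by
        intro b
        rw [Matrix.mul_apply]
        calc ∑ a, Hmat k1 i a * X a b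
            = ∑ a, (Hmat k1 i a * X a L2 + X L1 b * Hmat k1 i a - X L1 L2 * Hmat k1 i a) := by
              apply Finset.sum_congr rfl
              intro a _
              rw [key a b]; ring
          _ = ∑ a, Hmat k1 i a * X a L2 + X L1 b * ∑ a, Hmat k1 i a
                - X L1 L2 * ∑ a, Hmat k1 i a := by
              rw [Finset.sum_sub_distrib, Finset.sum_add_distrib, Finset.mul_sum, Finset.mul_sum]
          _ = _ := by rw [Hmat_row_sum k1 hk1 i]
      simp only [mul_zero, add_zero, sub_zero] at hinner
      calc ∑ b, (Hmat k1 * X) i b * Hmat k2 b j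
          = ∑ b, (∑ a, Hmat k1 i a * X a L2) * Hmat k2 b j := by
            apply Finset.sum_congr rfl; intro b _; rw [hinner b]
        _ = (∑ a, Hmat k1 i a * X a L2) * ∑ b, Hmat k2 b j := by rw [Finset.mul_sum]
        _ = 0 := by rw [Hmat_col_sum k2 hk2 j, mul_zero]
    have htr : (Hmat k1 * R * Hmat k2)ᵀ = Hmat k2 * (Rᵀ * Hmat k1) := by
      rw [Matrix.transpose_mul, Matrix.transpose_mul, Hmat_transpose, Hmat_transpose]
    rw [htr]
    calc Matrix.trace (Hmat k2 * (Rᵀ * Hmat k1) * X)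
        = Matrix.trace (Rᵀ * Hmat k1 * X * Hmat k2) := by
          rw [Matrix.mul_assoc, Matrix.trace_mul_comm]
      _ = Matrix.trace (Rᵀ * (Hmat k1 * X * Hmat k2)) := by
          rw [Matrix.mul_assoc, Matrix.mul_assoc, ← Matrix.mul_assoc (Hmat k1) X (Hmat k2)]
      _ = 0 := by rw [hHXH, Matrix.mul_zero, Matrix.trace_zero]
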